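/- (CR estimator biased as demand grows, homogeneous market.) Let 0 < φ < φ̃, ψ = φ·F(φ), ψ̃ = φ̃·F(φ̃) (so 0 < ψ < ψ̃), and a ∈ (0,1). Define the CR bias b(λ) = λ·(ψ̃ − ψ)·F(λ·(aψ̃ + (1−a)ψ)) − (exp(−λψ) − exp(−λψ̃)). Then as λ → ∞, b(λ) → (ψ̃ − ψ)/(aψ̃ + (1−a)ψ), which is strictly positive. -/

import Mathlib

noncomputable def F : ℝ → ℝ := fun x => if x = 0 then 1 else (1 - Real.exp (-x)) / x

lemma mul_F (x : ℝ) : x * F x = 1 - Real.exp (-x) := by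
  unfold F
  rcases eq_or_ne x 0 with h | h
  · simp [h]
  · rw [if_neg h, mul_div_assoc', mul_div_cancel_left₀ _ h]

lemma exp_neg_mul_tendsto {k : ℝ} (hk : 0 < k) :
    Filter.Tendsto (fun lam : ℝ => Real.exp (-(lam * k))) Filter.atTop (nhds 0) := by
  have h1 : Filter.Tendsto (fun lam : ℝ => lam * k) Filter.atTop Filter.atTop :=
    Filter.tendsto_id.atTop_mul_const hk
  have h2 : Filter.Tendsto (fun lam : ℝ => -(lam * k)) Filter.atTop Filter.atBot :=
    Filter.tendsto_neg_atTop_atBot.comp h1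
  exact Real.tendsto_exp_atBot.comp h2

theorem stmt_12 (φ φt a : ℝ) (hφ : 0 < φ) (hlt : φ < φt) (ha : a ∈ Set.Ioo (0:ℝ) 1) :
    Filter.Tendsto (fun lam : ℝ =>
        lam * (φt * F φt - φ * F φ)
            * F (lam * (a * (φt * F φt) + (1 - a) * (φ * F φ)))
          - (Real.exp (-(lam * (φ * F φ))) - Real.exp (-(lam * (φt * F φt)))))
      Filter.atTop
      (nhds ((φt * F φt - φ * F φ) / (a * (φt * F φt) + (1 - a) * (φ * F φ)))) ∧
    0 < (φt * F φt - φ * F φ) / (a * (φt * F φt) + (1 - a) * (φ * F φ)) := by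
  obtain ⟨ha0, ha1⟩ := ha
  set ψ := φ * F φ with hψdef
  set ψt := φt * F φt with hψtdef
  have hψ : ψ = 1 - Real.exp (-φ) := mul_F φ
  have hψt : ψt = 1 - Real.exp (-φt) := mul_F φt
  have hψpos : 0 < ψ := by
    rw [hψ]; simp only [sub_pos]
    exact Real.exp_lt_one_iff.mpr (by linarith)
  have hψtpos : 0 < ψt := by
    rw [hψt]; simp only [sub_pos]
    exact Real.exp_lt_one_iff.mpr (by linarith)
  have hψlt : ψ < ψt := by
    rw [hψ, hψt]
    have : Real.exp (-φt) < Real.exp (-φ) := Real.exp_lt_exp.mpr (by linarith)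
    linarith
  set c := a * ψt + (1 - a) * ψ with hcdef
  have hcpos : 0 < c := by
    apply add_pos (mul_pos ha0 hψtpos) (mul_pos (by linarith) hψpos)
  constructor
  · have key : Filter.Tendsto (fun lam : ℝ =>
        (ψt - ψ) / c * (1 - Real.exp (-(lam * c)))
          - (Real.exp (-(lam * ψ)) - Real.exp (-(lam * ψt))))
        Filter.atTop (nhds ((ψt - ψ) / c * (1 - 0) - (0 - 0))) := by
      exact ((Filter.Tendsto.const_mul _
        (tendsto_const_nhds.sub (exp_neg_mul_tendsto hcpos))).sub
        ((exp_neg_mul_tendsto hψpos).sub (exp_neg_mul_tendsto hψtpos)))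
    have key2 := key
    rw [show (ψt - ψ) / c * (1 - 0) - (0 - 0) = (ψt - ψ) / c by ring] at key2
    apply key2.congr'
    filter_upwards [Filter.eventually_gt_atTop (0:ℝ)] with lam hlam
    have hlc : lam * c ≠ 0 := ne_of_gt (mul_pos hlam hcpos)
    have hF : F (lam * c) = (1 - Real.exp (-(lam * c))) / (lam * c) := by
      unfold F; rw [if_neg hlc]
    rw [hF]
    field_simp
  · exact div_pos (by linarith) hcpos
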